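/- In the symmetric case of the deterministic limit of the zealot model with reinforcement, with μ > 0, n ∈ (0, 1/2) and ϑ ∈ (0, 1), the linearization at the midpoint vanishes exactly at the pitchfork bifurcation value: F_{n,ϑ}'(1/2) = 0 if and only if ϑ = ϑ_p := (1−2n)/(1+2n). -/

import Mathlib

/-- The symmetric deterministic-limit drift of the zealot model with
reinforcement: `F_{n,ϑ}(x)` with rethinking rate `μ`, zealot ratio `n`,
and reinforcement weight `ϑ`. -/
noncomputable def Fsym (μ n ϑ x : ℝ) : ℝ :=
  μ * (1 - x) * (ϑ * (x + n)) / (ϑ * (x + n) + (1 - x + n))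
    - μ * x * (ϑ * (1 - x + n)) / ((x + n) + ϑ * (1 - x + n))

/-- With `μ > 0`, `n ∈ (0, 1/2)` and `ϑ ∈ (0, 1)`, the linearization of the
symmetric drift at the midpoint vanishes exactly at the pitchfork bifurcation
value: `F_{n,ϑ}'(1/2) = 0 ↔ ϑ = (1−2n)/(1+2n)`. -/
theorem deriv_zero_iff_pitchfork (μ n ϑ : ℝ) (hμ : 0 < μ)
    (hn : n ∈ Set.Ioo (0 : ℝ) (1 / 2)) (hϑ : ϑ ∈ Set.Ioo (0 : ℝ) 1) :
    deriv (Fsym μ n ϑ) (1 / 2) = 0 ↔ ϑ = (1 - 2 * n) / (1 + 2 * n) := by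
  obtain ⟨hn0, hn2⟩ := hn
  obtain ⟨hϑ0, hϑ1⟩ := hϑ
  set c : ℝ := 1 / 2
  have hs : (0:ℝ) < c + n := by positivity
  have hd1 : ϑ * (c + n) + (1 - c + n) ≠ 0 := by
    have : (0:ℝ) < ϑ * (c + n) + (1 - c + n) := by
      have : (0:ℝ) < 1 - c + n := by norm_num [c]; linarith
      positivity
    linarith
  have hd2 : (c + n) + ϑ * (1 - c + n) ≠ 0 := by
    have : (0:ℝ) < (c + n) + ϑ * (1 - c + n) := by
      have : (0:ℝ) < 1 - c + n := by norm_num [c]; linarith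
      positivity
    linarith
  -- basic derivatives
  have hA : HasDerivAt (fun x : ℝ => 1 - x) (-1) c := by
    simpa using (hasDerivAt_id c).const_sub 1
  have hB : HasDerivAt (fun x : ℝ => x + n) 1 c := (hasDerivAt_id c).add_const n
  have hB' : HasDerivAt (fun x : ℝ => ϑ * (x + n)) ϑ c := by
    simpa using hB.const_mul ϑ
  have hC : HasDerivAt (fun x : ℝ => 1 - x + n) (-1) c := by
    simpa using hA.add_const n
  have hC' : HasDerivAt (fun x : ℝ => ϑ * (1 - x + n)) (ϑ * (-1)) c := hC.const_mul ϑ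
  have hf1 : HasDerivAt (fun x : ℝ => μ * (1 - x) * (ϑ * (x + n)))
      ((μ * (-1)) * (ϑ * (c + n)) + (μ * (1 - c)) * ϑ) c := by
    simpa [mul_comm, mul_left_comm, mul_assoc, Pi.mul_def] using (hA.const_mul μ).mul hB'
  have hg1 : HasDerivAt (fun x : ℝ => ϑ * (x + n) + (1 - x + n)) (ϑ + (-1)) c :=
    hB'.add hC
  have hf2 : HasDerivAt (fun x : ℝ => μ * x * (ϑ * (1 - x + n)))
      (μ * (ϑ * (1 - c + n)) + (μ * c) * (ϑ * (-1))) c := by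
    simpa [mul_comm, mul_left_comm, mul_assoc, Pi.mul_def] using
      (((hasDerivAt_id c).const_mul μ).mul hC')
  have hg2 : HasDerivAt (fun x : ℝ => (x + n) + ϑ * (1 - x + n)) (1 + ϑ * (-1)) c :=
    hB.add hC'
  have hF : HasDerivAt (Fsym μ n ϑ)
      ((((μ * (-1)) * (ϑ * (c + n)) + (μ * (1 - c)) * ϑ) * (ϑ * (c + n) + (1 - c + n)) -
          μ * (1 - c) * (ϑ * (c + n)) * (ϑ + (-1))) / (ϑ * (c + n) + (1 - c + n)) ^ 2 -
        ((μ * (ϑ * (1 - c + n)) + (μ * c) * (ϑ * (-1))) * ((c + n) + ϑ * (1 - c + n)) -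
          μ * c * (ϑ * (1 - c + n)) * (1 + ϑ * (-1))) / ((c + n) + ϑ * (1 - c + n)) ^ 2) c := by
    exact (hf1.div hg1 hd1).sub (hf2.div hg2 hd2)
  rw [hF.deriv]
  -- simplify the derivative value
  have hc : c = 1 / 2 := rfl
  have hden : ϑ * (c + n) + (1 - c + n) = (ϑ + 1) * (1 / 2 + n) := by
    rw [hc]; ring
  have hden2 : (c + n) + ϑ * (1 - c + n) = (ϑ + 1) * (1 / 2 + n) := by
    rw [hc]; ring
  have hpos : (0:ℝ) < (ϑ + 1) * (1 / 2 + n) := by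
    have : (0:ℝ) < 1 / 2 + n := by linarith
    positivity
  have key : (((μ * (-1)) * (ϑ * (c + n)) + (μ * (1 - c)) * ϑ) * (ϑ * (c + n) + (1 - c + n)) -
          μ * (1 - c) * (ϑ * (c + n)) * (ϑ + (-1))) / (ϑ * (c + n) + (1 - c + n)) ^ 2 -
        ((μ * (ϑ * (1 - c + n)) + (μ * c) * (ϑ * (-1))) * ((c + n) + ϑ * (1 - c + n)) -
          μ * c * (ϑ * (1 - c + n)) * (1 + ϑ * (-1))) / ((c + n) + ϑ * (1 - c + n)) ^ 2
      = μ * ϑ * ((1 - ϑ) - 2 * n * (1 + ϑ)) / ((ϑ + 1) ^ 2 * (1 / 2 + n)) := by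
    rw [hden, hden2, hc]
    have h1 : (0:ℝ) < 1 / 2 + n := by linarith
    field_simp
    ring
  rw [key]
  have hdne : ((ϑ + 1) ^ 2 * (1 / 2 + n)) ≠ 0 := by positivity
  rw [div_eq_zero_iff]
  constructor
  · rintro (h | h)
    · have hμϑ : μ * ϑ ≠ 0 := by positivity
      have h2 : (1 - ϑ) - 2 * n * (1 + ϑ) = 0 := by
        rcases mul_eq_zero.1 h with h' | h'
        · exact absurd h' hμϑ
        · exact h'
      have hne : (1 + 2 * n) ≠ 0 := by linarith
      field_simp
      nlinarith [h2]
    · exact absurd h hdne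
  · intro h
    left
    have hne : (1 + 2 * n) ≠ 0 := by linarith
    rw [h]
    field_simp
    ring
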